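/- Let H be a hybrid quantum–classical Hamiltonian on Fin n × Fin m, H = (Matrix.diagonal ε ⊗ₖ 1) + (1 ⊗ₖ H_Q) + ∑ i, (γ i : ℂ) • (Matrix.stdBasisMatrix i i 1 ⊗ₖ S i). For every classical basis index i₀ : Fin n, every t : ℝ and every complex matrix ρ indexed by Fin n × Fin m, the probability weight of the classical pure state i₀ is invariant under the hybrid evolution: Matrix.trace ((Matrix.stdBasisMatrix i₀ i₀ 1 ⊗ₖ 1) * (Matrix.exp ℂ (-(t • Complex.I) • H) * ρ * Matrix.exp ℂ ((t • Complex.I) • H))) = Matrix.trace ((Matrix.stdBasisMatrix i₀ i₀ 1 ⊗ₖ 1) * ρ). (The classical probability distribution over the single classical basis is unchanged by any hybrid Hamiltonian dynamics.) -/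

import Mathlib

open Matrix Kronecker

lemma commute_exp_matrix {ι : Type*} [Fintype ι] [DecidableEq ι]
    {P A : Matrix ι ι ℂ} (h : Commute P A) : Commute P (NormedSpace.exp A) := by
  letI : SeminormedRing (Matrix ι ι ℂ) := Matrix.linftyOpSemiNormedRing
  letI : NormedRing (Matrix ι ι ℂ) := Matrix.linftyOpNormedRing
  letI : NormedAlgebra ℂ (Matrix ι ι ℂ) := Matrix.linftyOpNormedAlgebra
  exact h.exp_right

lemma stdBasis_commute_diagonal {n : ℕ} (i₀ : Fin n) (d : Fin n → ℂ) :
    Matrix.single i₀ i₀ (1 : ℂ) * Matrix.diagonal d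
      = Matrix.diagonal d * Matrix.single i₀ i₀ (1 : ℂ) := by
  ext a b
  by_cases ha : a = i₀ <;> by_cases hb : b = i₀ <;>
    simp_all [Matrix.diagonal_apply, Ne.symm]

lemma stdBasis_commute_stdBasis {n : ℕ} (i₀ i : Fin n) :
    Matrix.single i₀ i₀ (1 : ℂ) * Matrix.single i i (1 : ℂ)
      = Matrix.single i i (1 : ℂ) * Matrix.single i₀ i₀ (1 : ℂ) := by
  by_cases h : i = i₀
  · subst h; rfl
  · rw [Matrix.single_mul_single_of_ne (h := Ne.symm h),
      Matrix.single_mul_single_of_ne (h := h)]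

/-- The probability weight of each classical pure state is invariant under any
hybrid Hamiltonian evolution. -/
theorem classical_pure_state_weight_conserved_under_hybrid_evolution
    (n m : ℕ)
    (ε γ : Fin n → ℝ)
    (H_Q : Matrix (Fin m) (Fin m) ℂ)
    (S : Fin n → Matrix (Fin m) (Fin m) ℂ)
    (H : Matrix (Fin n × Fin m) (Fin n × Fin m) ℂ)
    (hH : H = (Matrix.diagonal (fun i => (ε i : ℂ)) ⊗ₖ 1)
        + ((1 : Matrix (Fin n) (Fin n) ℂ) ⊗ₖ H_Q)
        + ∑ i : Fin n, (γ i : ℂ) • (Matrix.single i i 1 ⊗ₖ S i))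
    (i₀ : Fin n) (t : ℝ)
    (ρ : Matrix (Fin n × Fin m) (Fin n × Fin m) ℂ) :
    Matrix.trace ((Matrix.single i₀ i₀ (1 : ℂ) ⊗ₖ (1 : Matrix (Fin m) (Fin m) ℂ))
        * (NormedSpace.exp (-(t • Complex.I) • H) * ρ * NormedSpace.exp ((t • Complex.I) • H)))
      = Matrix.trace ((Matrix.single i₀ i₀ (1 : ℂ) ⊗ₖ (1 : Matrix (Fin m) (Fin m) ℂ)) * ρ) := by
  set P := Matrix.single i₀ i₀ (1 : ℂ) ⊗ₖ (1 : Matrix (Fin m) (Fin m) ℂ) with hP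
  have hPH : Commute P H := by
    rw [hH]
    refine (Commute.add_right (Commute.add_right ?_ ?_) ?_)
    · rw [hP, Commute, SemiconjBy, ← Matrix.mul_kronecker_mul, ← Matrix.mul_kronecker_mul,
        stdBasis_commute_diagonal]
    · rw [hP, Commute, SemiconjBy, ← Matrix.mul_kronecker_mul, ← Matrix.mul_kronecker_mul,
        one_mul, mul_one, mul_one, one_mul]
    · refine Commute.sum_right _ _ _ fun i _ => Commute.smul_right ?_ _
      rw [hP, Commute, SemiconjBy, ← Matrix.mul_kronecker_mul, ← Matrix.mul_kronecker_mul,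
        one_mul, mul_one, stdBasis_commute_stdBasis]
  have h1 : Commute P (NormedSpace.exp (-(t • Complex.I) • H)) :=
    commute_exp_matrix (hPH.smul_right _)
  have hinv : NormedSpace.exp ((t • Complex.I) • H) *
      NormedSpace.exp (-(t • Complex.I) • H) = 1 := by
    rw [← Matrix.exp_add_of_commute _ _ (by rw [neg_smul]; exact (Commute.refl _).neg_right)]
    rw [neg_smul, add_neg_cancel, NormedSpace.exp_zero]
  calc Matrix.trace (P * (NormedSpace.exp (-(t • Complex.I) • H) * ρ *
        NormedSpace.exp ((t • Complex.I) • H)))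
      = Matrix.trace (NormedSpace.exp (-(t • Complex.I) • H) * (P * ρ) *
        NormedSpace.exp ((t • Complex.I) • H)) := by
        rw [← mul_assoc, ← mul_assoc, ← mul_assoc, ← h1.eq]
    _ = Matrix.trace (NormedSpace.exp ((t • Complex.I) • H) *
        (NormedSpace.exp (-(t • Complex.I) • H) * (P * ρ))) := by
        rw [Matrix.trace_mul_comm]
    _ = Matrix.trace (P * ρ) := by rw [← mul_assoc, hinv, one_mul]
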